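/- arXiv:2604.05870 — 4 statements merged into one kernel-verified Lean document; each statement's English description precedes it below -/
import Mathlib

section
/- Let F₁, …, F_r (r ≥ 1) be random Pauli errors on a finite set Ω, defined on a common probability space and possibly dependent, such that F_i is local stochastic of strength p_i ∈ [0,1] for each i ∈ [r]. Then the pointwise product F₁·…·F_r, defined by (F₁·…·F_r)(w) = F₁(w) + … + F_r(w) in P, is local stochastic of strength p′ = r · (max_i p_i)^{1/r}; that is, Pr[W ⊆ supp(F₁·…·F_r)] ≤ (r · max_i p_i^{1/r})^{|W|} for every subset W ⊆ Ω. (Lemma 1.1(iii) of the paper.) -/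
open MeasureTheory

/-- The single-qubit Pauli group modulo phases, written additively. -/
abbrev Pauli : Type := ZMod 2 × ZMod 2

/-- A random Pauli error `F` on a finite set `Ω` of wires is *local stochastic of
strength `p`* if for every subset `W ⊆ Ω` the probability that `W` is contained in the
support of `F` is at most `p ^ |W|`. -/
def IsLocalStochastic {α Ω : Type*} [MeasurableSpace α] [Fintype Ω] (μ : Measure α)
    (F : α → Ω → Pauli) (p : ℝ) : Prop :=
  ∀ W : Finset Ω, μ {a | ∀ w ∈ W, F a w ≠ 0} ≤ ENNReal.ofReal (p ^ W.card)

private lemma aux_pow (r k m : ℕ) (hr : 1 ≤ r) (q pi : ℝ)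
    (hq1 : q ≤ 1) (hpi0 : 0 ≤ pi) (hpi : pi ≤ q) (hkm : k ≤ r * m) :
    pi ^ m ≤ (q ^ ((1:ℝ)/(r:ℝ))) ^ k := by
  have hq0 : 0 ≤ q := le_trans hpi0 hpi
  have hr0 : (0:ℝ) < r := by exact_mod_cast Nat.lt_of_lt_of_le Nat.zero_lt_one hr
  have hrhs : (q ^ ((1:ℝ)/(r:ℝ))) ^ k = q ^ ((k:ℝ)/(r:ℝ)) := by
    rw [← Real.rpow_natCast (q ^ ((1:ℝ)/(r:ℝ))) k, ← Real.rpow_mul hq0]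
    ring_nf
  have h1 : pi ^ m ≤ q ^ m := pow_le_pow_left₀ hpi0 hpi m
  rw [hrhs]
  rcases eq_or_lt_of_le hq0 with h0 | hqpos
  · -- q = 0
    cases k with
    | zero =>
      simp only [Nat.cast_zero, zero_div, Real.rpow_zero]
      exact le_trans h1 (pow_le_one₀ hq0 hq1)
    | succ k' =>
      have hm : m ≠ 0 := by
        rintro rfl; omega
      have hpi' : pi = 0 := le_antisymm (h0 ▸ hpi) hpi0
      rw [hpi', zero_pow hm]
      exact Real.rpow_nonneg hq0 _
  · refine le_trans h1 ?_
    rw [← Real.rpow_natCast q m]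
    refine Real.rpow_le_rpow_of_exponent_ge hqpos hq1 ?_
    rw [div_le_iff₀ hr0]
    have hkm' : k ≤ m * r := by rwa [Nat.mul_comm]
    exact_mod_cast hkm'

/-- **Lemma 1.1(iii)**: if `F₁, …, F_r` are (possibly dependent) random Pauli errors,
with `F_i` local stochastic of strength `p_i`, then the pointwise product
`F₁ ⋅ … ⋅ F_r` is local stochastic of strength `p' = r · (max_i p_i)^(1/r)`. -/
theorem prod_localStochastic {α Ω : Type*} [MeasurableSpace α] [Fintype Ω]
    (μ : Measure α) [IsProbabilityMeasure μ]
    (r : ℕ) (hr : 1 ≤ r)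
    (p : Fin r → ℝ) (hp0 : ∀ i, 0 ≤ p i) (hp1 : ∀ i, p i ≤ 1)
    (F : Fin r → α → Ω → Pauli)
    (hF : ∀ i, IsLocalStochastic μ (F i) (p i)) :
    IsLocalStochastic μ (fun a w => ∑ i, F i a w)
      ((r : ℝ) * (⨆ i, p i) ^ ((1 : ℝ) / (r : ℝ))) := by
  classical
  intro W
  have hFin : Nonempty (Fin r) := ⟨⟨0, hr⟩⟩
  set q : ℝ := ⨆ i, p i with hq
  set k := W.card with hk
  have hq1 : q ≤ 1 := ciSup_le hp1
  have hpq : ∀ i, p i ≤ q := fun i => le_ciSup (Set.Finite.bddAbove (Set.finite_range p)) i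
  have hq0 : 0 ≤ q := le_trans (hp0 hFin.some) (hpq hFin.some)
  -- inclusion into a union over colorings
  have hsub : {a | ∀ w ∈ W, (∑ i, F i a w) ≠ 0} ⊆
      ⋃ c : {x // x ∈ W} → Fin r, {a | ∀ w : {x // x ∈ W}, F (c w) a w.1 ≠ 0} := by
    intro a ha
    have hchoice : ∀ w : {x // x ∈ W}, ∃ i, F i a w.1 ≠ 0 := by
      intro w
      by_contra h
      push_neg at h
      exact ha w.1 w.2 (Finset.sum_eq_zero fun i _ => h i)
    exact Set.mem_iUnion.2 ⟨fun w => (hchoice w).choose, fun w => (hchoice w).choose_spec⟩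
  -- bound each term of the union
  have hterm : ∀ c : {x // x ∈ W} → Fin r,
      μ {a | ∀ w : {x // x ∈ W}, F (c w) a w.1 ≠ 0} ≤
        ENNReal.ofReal ((q ^ ((1:ℝ)/(r:ℝ))) ^ k) := by
    intro c
    -- pigeonhole: some fiber has size ≥ k / r
    obtain ⟨i, hi⟩ : ∃ i : Fin r, k ≤ r * (Finset.univ.filter fun w => c w = i).card := by
      by_contra h
      push_neg at h
      have hsum : ∑ i : Fin r, (Finset.univ.filter fun w => c w = i).card = k := by
        rw [← Finset.card_eq_sum_card_fiberwise (fun w _ => Finset.mem_univ (c w))]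
        simp [hk]
      have h2 : k * r < k * r := by
        calc k * r = (∑ i : Fin r, (Finset.univ.filter fun w => c w = i).card) * r := by
              rw [hsum]
          _ = ∑ i : Fin r, (Finset.univ.filter fun w => c w = i).card * r :=
              Finset.sum_mul ..
          _ < ∑ _i : Fin r, k :=
              Finset.sum_lt_sum_of_nonempty Finset.univ_nonempty
                (fun i _ => by rw [Nat.mul_comm]; exact h i)
          _ = r * k := by
              rw [Finset.sum_const, Finset.card_univ, Fintype.card_fin, smul_eq_mul]
          _ = k * r := mul_comm _ _
      exact absurd h2 (lt_irrefl _)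
    set W' : Finset Ω :=
      (Finset.univ.filter fun w : {x // x ∈ W} => c w = i).image Subtype.val with hW'
    have hcard : W'.card = (Finset.univ.filter fun w : {x // x ∈ W} => c w = i).card :=
      Finset.card_image_of_injective _ Subtype.val_injective
    have hincl : {a | ∀ w : {x // x ∈ W}, F (c w) a w.1 ≠ 0} ⊆
        {a | ∀ w ∈ W', F i a w ≠ 0} := by
      intro a ha w hw
      obtain ⟨w', hw', rfl⟩ := Finset.mem_image.1 hw
      have := Finset.mem_filter.1 hw'
      rw [← this.2]
      exact ha w'
    calc μ {a | ∀ w : {x // x ∈ W}, F (c w) a w.1 ≠ 0}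
        ≤ μ {a | ∀ w ∈ W', F i a w ≠ 0} := measure_mono hincl
      _ ≤ ENNReal.ofReal ((p i) ^ W'.card) := hF i W'
      _ ≤ ENNReal.ofReal ((q ^ ((1:ℝ)/(r:ℝ))) ^ k) := by
          refine ENNReal.ofReal_le_ofReal ?_
          refine aux_pow r k W'.card hr q (p i) hq1 (hp0 i) (hpq i) ?_
          rw [hcard]; exact hi
  calc μ {a | ∀ w ∈ W, (fun a w => ∑ i, F i a w) a w ≠ 0}
      ≤ μ (⋃ c : {x // x ∈ W} → Fin r, {a | ∀ w : {x // x ∈ W}, F (c w) a w.1 ≠ 0}) :=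
        measure_mono hsub
    _ ≤ ∑' c : {x // x ∈ W} → Fin r, μ {a | ∀ w : {x // x ∈ W}, F (c w) a w.1 ≠ 0} :=
        measure_iUnion_le _
    _ ≤ ∑' _c : {x // x ∈ W} → Fin r, ENNReal.ofReal ((q ^ ((1:ℝ)/(r:ℝ))) ^ k) :=
        ENNReal.tsum_le_tsum hterm
    _ = (Fintype.card ({x // x ∈ W} → Fin r)) *
          ENNReal.ofReal ((q ^ ((1:ℝ)/(r:ℝ))) ^ k) := by
        rw [tsum_fintype, Finset.sum_const, Finset.card_univ, nsmul_eq_mul]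
    _ = ENNReal.ofReal (((r:ℝ) * q ^ ((1:ℝ)/(r:ℝ))) ^ k) := by
        rw [Fintype.card_fun, Fintype.card_fin, Fintype.card_coe, mul_pow,
          ENNReal.ofReal_mul (by positivity), ← hk]
        congr 1
        rw [← Nat.cast_pow, ENNReal.ofReal_natCast, Nat.cast_pow]
end

section
/- Let F and F̃ be random Pauli errors on a finite set Ω, defined on a common probability space, each local stochastic of strength p ∈ [0,1], and let L ⊆ Ω be a fixed subset. Define the localization F^{↾L} to be equal to F on the event {supp(F) ⊆ L} and equal to the identically-zero function otherwise, and define F̃^{↾L} analogously. If F^{↾L} = F̃^{↾L} holds with probability 1, then Pr[F ≠ F̃] ≤ 2 · |Ω \ L| · p. (Probabilistic core of Lemma 2.1(iii).) -/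
open MeasureTheory

open scoped Classical in
/-- The localization `f^{↾L}` of a Pauli error: equal to `f` if `supp f ⊆ L`, and
equal to the identity (zero) error otherwise. -/
noncomputable def localize {Ω : Type*} (L : Finset Ω) (f : Ω → Pauli) : Ω → Pauli :=
  if ∀ w : Ω, f w ≠ 0 → w ∈ L then f else 0

lemma localize_eq_ne_exists {Ω : Type*} (L : Finset Ω) (f g : Ω → Pauli)
    (h : localize L f = localize L g) (hne : f ≠ g) :
    ∃ w ∉ L, f w ≠ 0 ∨ g w ≠ 0 := by
  by_contra hc
  push_neg at hc
  have hf : ∀ w : Ω, f w ≠ 0 → w ∈ L := by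
    intro w hw; by_contra hwL; exact hw (hc w hwL).1
  have hg : ∀ w : Ω, g w ≠ 0 → w ∈ L := by
    intro w hw; by_contra hwL; exact hw (hc w hwL).2
  apply hne
  classical
  rw [localize, localize, if_pos hf, if_pos hg] at h
  exact h

/-- **Probabilistic core of Lemma 2.1(iii)**: if `F` and `F̃` are local stochastic
Pauli errors of strength `p` whose localizations to `L` agree almost surely, then
`F ≠ F̃` with probability at most `2 · |Ω \ L| · p`. -/
theorem prob_ne_of_localize_eq {α Ω : Type*} [MeasurableSpace α] [Fintype Ω] [DecidableEq Ω]
    (μ : Measure α) [IsProbabilityMeasure μ]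
    (p : ℝ) (hp0 : 0 ≤ p) (hp1 : p ≤ 1)
    (F F' : α → Ω → Pauli)
    (hF : IsLocalStochastic μ F p) (hF' : IsLocalStochastic μ F' p)
    (L : Finset Ω)
    (hloc : ∀ᵐ a ∂μ, localize L (F a) = localize L (F' a)) :
    μ {a | F a ≠ F' a} ≤ ENNReal.ofReal (2 * (Lᶜ.card : ℝ) * p) := by
  classical
  set T : Set α := ⋃ w ∈ Lᶜ, ({a | F a w ≠ 0} ∪ {a | F' a w ≠ 0}) with hT
  have hmono : μ {a | F a ≠ F' a} ≤ μ T := by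
    apply measure_mono_ae
    filter_upwards [hloc] with a ha hne
    obtain ⟨w, hwL, hcase⟩ := localize_eq_ne_exists L (F a) (F' a) ha hne
    exact Set.mem_biUnion (Finset.mem_coe.2 (Finset.mem_compl.2 hwL)) hcase
  refine hmono.trans ?_
  have hsingle : ∀ (G : α → Ω → Pauli), IsLocalStochastic μ G p →
      ∀ w : Ω, μ {a | G a w ≠ 0} ≤ ENNReal.ofReal p := by
    intro G hG w
    have := hG {w}
    simpa using this
  calc μ T ≤ ∑ w ∈ Lᶜ, μ ({a | F a w ≠ 0} ∪ {a | F' a w ≠ 0}) := by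
        exact measure_biUnion_finset_le _ _
    _ ≤ ∑ w ∈ Lᶜ, (ENNReal.ofReal p + ENNReal.ofReal p) := by
        refine Finset.sum_le_sum fun w _ => ?_
        exact (measure_union_le _ _).trans
          (add_le_add (hsingle F hF w) (hsingle F' hF' w))
    _ = ENNReal.ofReal (2 * (Lᶜ.card : ℝ) * p) := by
        rw [Finset.sum_const, ← ENNReal.ofReal_add hp0 hp0]
        rw [nsmul_eq_mul, ← ENNReal.ofReal_natCast (Lᶜ.card),
          ← ENNReal.ofReal_mul (by positivity)]
        congr 1
        ring
end

section
/- Let Ω be a finite set and let S be a random subset of Ω that is local stochastic of strength p ∈ [0,1]. Let U, V ≥ 1 be integers, let A₁, …, A_m ⊆ Ω be pairwise disjoint subsets with |A_j| ≤ U for all j, and let B₁, …, B_m ⊆ Ω be pairwise disjoint subsets with |B_j| ≤ V for all j. Let L be a random subset of Ω, defined on the same probability space, such that with probability 1: L ⊆ B₁ ∪ … ∪ B_m, and for every j ∈ [m], if L ∩ B_j ≠ ∅ then S ∩ A_j ≠ ∅. Then L is local stochastic of strength (U·p)^{1/V}; that is, Pr[W ⊆ L] ≤ ((U·p)^{1/V})^{|W|}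 for every subset W ⊆ Ω. (Claim 4.2 inside the proof of Lemma 4.3, circuit error cleaning for adaptive read-once rectangles.) -/
open MeasureTheory

/-- A random subset `S` of a finite set `Ω` is *local stochastic of strength `p`* if for
every subset `W ⊆ Ω` the probability that `W ⊆ S` is at most `p ^ |W|`. -/
def IsLocalStochasticSet {α Ω : Type*} [MeasurableSpace α] [Fintype Ω] (μ : Measure α)
    (S : α → Set Ω) (p : ℝ) : Prop :=
  ∀ W : Finset Ω, μ {a | ↑W ⊆ S a} ≤ ENNReal.ofReal (p ^ W.card)

/-- **Claim 4.2** (circuit error cleaning for adaptive read-once rectangles): let `S` be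
a local stochastic random subset of strength `p`, let `A₁, …, A_m` be pairwise disjoint
subsets of cardinality `≤ U`, and `B₁, …, B_m` pairwise disjoint subsets of cardinality
`≤ V`. If the random subset `L` is almost surely contained in `B₁ ∪ … ∪ B_m` and can
only meet `B_j` when `S` meets `A_j`, then `L` is local stochastic of strength
`(U·p)^(1/V)`. -/
theorem adaptive_cleaning_localStochastic {α Ω : Type*} [MeasurableSpace α] [Fintype Ω]
    (μ : Measure α) [IsProbabilityMeasure μ]
    (p : ℝ) (hp0 : 0 ≤ p) (hp1 : p ≤ 1)
    (S : α → Set Ω) (hS : IsLocalStochasticSet μ S p)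
    (m U V : ℕ) (hU : 1 ≤ U) (hV : 1 ≤ V)
    (A B : Fin m → Finset Ω)
    (hAdisj : ∀ i j : Fin m, i ≠ j → Disjoint (A i) (A j))
    (hAcard : ∀ j, (A j).card ≤ U)
    (hBdisj : ∀ i j : Fin m, i ≠ j → Disjoint (B i) (B j))
    (hBcard : ∀ j, (B j).card ≤ V)
    (L : α → Set Ω)
    (hL : ∀ᵐ a ∂μ,
      (L a ⊆ ⋃ j : Fin m, ↑(B j)) ∧
        ∀ j : Fin m, (L a ∩ ↑(B j)).Nonempty → (S a ∩ ↑(A j)).Nonempty) :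
    IsLocalStochasticSet μ L (((U : ℝ) * p) ^ ((1 : ℝ) / (V : ℝ))) := by
  classical
  intro W
  set q : ℝ := ((U : ℝ) * p) ^ ((1 : ℝ) / (V : ℝ)) with hq
  have hUp0 : 0 ≤ (U : ℝ) * p := mul_nonneg (by positivity) hp0
  have hq0 : 0 ≤ q := Real.rpow_nonneg hUp0 _
  by_cases hUp1 : (U : ℝ) * p ≤ 1
  · have hq1 : q ≤ 1 := Real.rpow_le_one hUp0 hUp1 (by positivity)
    by_cases hWB : (W : Set Ω) ⊆ ⋃ j : Fin m, ↑(B j)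
    · set J : Finset (Fin m) := Finset.univ.filter (fun j => (W ∩ B j).Nonempty) with hJ
      have hWcard : W.card ≤ V * J.card := by
        have hsub : W ⊆ J.biUnion (fun j => W ∩ B j) := by
          intro w hw
          obtain ⟨_, ⟨j, rfl⟩, hj⟩ := hWB hw
          have hwj : w ∈ W ∩ B j := Finset.mem_inter.2 ⟨hw, hj⟩
          exact Finset.mem_biUnion.2 ⟨j, Finset.mem_filter.2 ⟨Finset.mem_univ _, ⟨w, hwj⟩⟩, hwj⟩
        calc W.card ≤ (J.biUnion fun j => W ∩ B j).card := Finset.card_le_card hsub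
          _ ≤ ∑ j ∈ J, (W ∩ B j).card := Finset.card_biUnion_le
          _ ≤ ∑ _j ∈ J, V := Finset.sum_le_sum (fun j _ =>
              le_trans (Finset.card_le_card Finset.inter_subset_right) (hBcard j))
          _ = V * J.card := by rw [Finset.sum_const, smul_eq_mul, mul_comm]
      set T := J.pi (fun j => A j) with hT
      have key : μ {a | ↑W ⊆ L a} ≤
          μ (⋃ g ∈ T, {a | (↑(J.attach.image fun j => g j.1 j.2) : Set Ω) ⊆ S a}) := by
        apply measure_mono_ae
        filter_upwards [hL] with a ha hWL
        obtain ⟨haB, haS⟩ := ha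
        have hpick : ∀ j, j ∈ J → (S a ∩ ↑(A j)).Nonempty := by
          intro j hj
          obtain ⟨w, hw⟩ := (Finset.mem_filter.1 hj).2
          obtain ⟨hw1, hw2⟩ := Finset.mem_inter.1 hw
          exact haS j ⟨w, ⟨hWL hw1, hw2⟩⟩
        refine Set.mem_iUnion.2 ⟨fun j hj => (hpick j hj).choose, Set.mem_iUnion.2 ⟨?_, ?_⟩⟩
        · exact Finset.mem_pi.2 fun j hj => (hpick j hj).choose_spec.2
        · intro x hx
          simp only [Finset.coe_image, Set.mem_image] at hx
          obtain ⟨j, _, rfl⟩ := hx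
          exact (hpick j.1 j.2).choose_spec.1
      have hE : ∀ g ∈ T, μ {a | (↑(J.attach.image fun j => g j.1 j.2) : Set Ω) ⊆ S a}
          ≤ ENNReal.ofReal (p ^ J.card) := by
        intro g hg
        have hcard : (J.attach.image fun j => g j.1 j.2).card = J.card := by
          rw [Finset.card_image_of_injOn, Finset.card_attach]
          intro j _ j' _ h
          by_contra hne
          have hne' : j.1 ≠ j'.1 := fun h' => hne (Subtype.ext h')
          have h1 := Finset.mem_pi.1 hg j.1 j.2
          have h2 := Finset.mem_pi.1 hg j'.1 j'.2
          have h' : g j.1 j.2 = g j'.1 j'.2 := h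
          exact Finset.disjoint_left.1 (hAdisj j.1 j'.1 hne') h1 (h' ▸ h2)
        calc μ _ ≤ ENNReal.ofReal (p ^ (J.attach.image fun j => g j.1 j.2).card) := hS _
          _ = ENNReal.ofReal (p ^ J.card) := by rw [hcard]
      have hTcard : T.card ≤ U ^ J.card := by
        rw [hT, Finset.card_pi]
        calc ∏ j ∈ J, (A j).card ≤ ∏ _j ∈ J, U :=
              Finset.prod_le_prod' (fun j _ => hAcard j)
          _ = U ^ J.card := Finset.prod_const U
      have hUnion : μ (⋃ g ∈ T, {a | (↑(J.attach.image fun j => g j.1 j.2) : Set Ω) ⊆ S a})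
          ≤ (T.card : ENNReal) * ENNReal.ofReal (p ^ J.card) := by
        refine le_trans (measure_biUnion_finset_le T _) ?_
        calc ∑ g ∈ T, μ {a | (↑(J.attach.image fun j => g j.1 j.2) : Set Ω) ⊆ S a}
            ≤ ∑ _g ∈ T, ENNReal.ofReal (p ^ J.card) := Finset.sum_le_sum hE
          _ = (T.card : ENNReal) * ENNReal.ofReal (p ^ J.card) := by
              rw [Finset.sum_const, nsmul_eq_mul]
      have hreal : (U : ℝ) ^ J.card * p ^ J.card ≤ q ^ W.card := by
        have h2 : ((U : ℝ) * p) ^ J.card = q ^ (V * J.card) := by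
          rw [pow_mul]
          congr 1
          rw [hq, ← Real.rpow_natCast (((U : ℝ) * p) ^ ((1 : ℝ) / (V : ℝ))) V,
            ← Real.rpow_mul hUp0, one_div,
            inv_mul_cancel₀ (by positivity : (V : ℝ) ≠ 0), Real.rpow_one]
        rw [← mul_pow, h2]
        exact pow_le_pow_of_le_one hq0 hq1 hWcard
      calc μ {a | ↑W ⊆ L a} ≤ (T.card : ENNReal) * ENNReal.ofReal (p ^ J.card) :=
            key.trans hUnion
        _ ≤ ((U ^ J.card : ℕ) : ENNReal) * ENNReal.ofReal (p ^ J.card) := by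
            gcongr
        _ = ENNReal.ofReal ((U : ℝ) ^ J.card * p ^ J.card) := by
            rw [ENNReal.ofReal_mul (by positivity)]
            congr 1
            rw [← ENNReal.ofReal_natCast (U ^ J.card)]
            push_cast
            ring_nf
        _ ≤ ENNReal.ofReal (q ^ W.card) := ENNReal.ofReal_le_ofReal hreal
    · have h0 : μ {a | ↑W ⊆ L a} ≤ μ (∅ : Set α) := by
        apply measure_mono_ae
        filter_upwards [hL] with a ha hWL
        obtain ⟨w, hw, hwB⟩ := Set.not_subset.1 hWB
        exact absurd (ha.1 (hWL hw)) hwB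
      exact (h0.trans_eq measure_empty).trans zero_le
  · have hq1 : (1:ℝ) ≤ q := by
      calc (1:ℝ) = (1:ℝ) ^ ((1:ℝ)/(V:ℝ)) := (Real.one_rpow _).symm
        _ ≤ q := Real.rpow_le_rpow (by norm_num) (le_of_not_ge hUp1) (by positivity)
    calc μ {a | ↑W ⊆ L a} ≤ 1 := prob_le_one
      _ ≤ ENNReal.ofReal (q ^ W.card) := by
          rw [ENNReal.one_le_ofReal]
          exact one_le_pow₀ hq1
end

section
/- Fix an even integer r ≥ 4 and consider the vertex set {1, …, 2r}. Define the edge classes of the bilinear array B_{2r}: E′₁ = {{2a−1, 2a} : a ∈ [r−1]}, E′₂ = {{4a−3, 4a−1} : a ∈ [r/2]} ∪ {{4a−2, 4a} : a ∈ [r/2]}, and E′₃ = {{4a−1, 4a+1} : a ∈ [r/2−1]} ∪ {{4a, 4a+2} : a ∈ [r/2−1]}. Define permutations of {1, …, 2r}: π₁ = id, π₂ = ∏_{k=0}^{r/2−1} (4k+2, 4k+3), and π₃ = ∏_{k=1}^{r/2−1} (4k, 4k+1), where each π_α is a product of pairwise disjoint transpositions exchanging consecutive integers. Then for every α ∈ {1,2,3}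 and every edge {u,v} ∈ E′_α, one has |π_α(u) − π_α(v)| = 1; i.e. π_α maps the color class E′_α into the edge set of the path graph P_{2r}. (The verification, stated after Corollary 5.1, that the path graph P_{2r} 1-reduces to the bilinear array graph B_{2r}.) -/
/-- **Verification (after Corollary 5.1) that the path graph `P_{2r}` 1-reduces to the
bilinear array `B_{2r}`**: with `π₁ = id`, `π₂ = ∏_{k=0}^{r/2−1} (4k+2, 4k+3)` and
`π₃ = ∏_{k=1}^{r/2−1} (4k, 4k+1)` — the latter two permutations being characterized by
their action, namely they exchange the indicated pairs of consecutive integers and fix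
all other points — every edge `{u,v}` of the color class `E′_α` of the bilinear array
satisfies `|π_α(u) − π_α(v)| = 1`, i.e. `π_α` maps `E′_α` into the edge set of the path
graph `P_{2r}`. -/
theorem bilinear_array_one_reduces_to_path
    (r : ℕ) (hr : 4 ≤ r) (hre : Even r)
    (π₁ π₂ π₃ : Equiv.Perm ℕ)
    (hπ₁ : π₁ = Equiv.refl ℕ)
    (hπ₂swap : ∀ k : ℕ, k < r / 2 → π₂ (4 * k + 2) = 4 * k + 3 ∧ π₂ (4 * k + 3) = 4 * k + 2)
    (hπ₂fix : ∀ m : ℕ, (∀ k : ℕ, k < r / 2 → m ≠ 4 * k + 2 ∧ m ≠ 4 * k + 3) → π₂ m = m)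
    (hπ₃swap : ∀ k : ℕ, 1 ≤ k → k < r / 2 →
      π₃ (4 * k) = 4 * k + 1 ∧ π₃ (4 * k + 1) = 4 * k)
    (hπ₃fix : ∀ m : ℕ, (∀ k : ℕ, 1 ≤ k → k < r / 2 → m ≠ 4 * k ∧ m ≠ 4 * k + 1) → π₃ m = m) :
    (∀ a : ℕ, 1 ≤ a → a ≤ r - 1 →
      Nat.dist (π₁ (2 * a - 1)) (π₁ (2 * a)) = 1) ∧
    (∀ a : ℕ, 1 ≤ a → a ≤ r / 2 →
      Nat.dist (π₂ (4 * a - 3)) (π₂ (4 * a - 1)) = 1 ∧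
        Nat.dist (π₂ (4 * a - 2)) (π₂ (4 * a)) = 1) ∧
    (∀ a : ℕ, 1 ≤ a → a ≤ r / 2 - 1 →
      Nat.dist (π₃ (4 * a - 1)) (π₃ (4 * a + 1)) = 1 ∧
        Nat.dist (π₃ (4 * a)) (π₃ (4 * a + 2)) = 1) := by
  have hr2 : 2 ≤ r / 2 := by omega
  refine ⟨?_, ?_, ?_⟩
  · intro a ha _
    simp only [hπ₁, Equiv.refl_apply, Nat.dist]
    omega
  · intro a ha har
    have hk : a - 1 < r / 2 := by omega
    have h1 : 4 * a - 3 = 4 * (a - 1) + 1 := by omega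
    have h2 : 4 * a - 1 = 4 * (a - 1) + 3 := by omega
    have h3 : 4 * a - 2 = 4 * (a - 1) + 2 := by omega
    have h4 : 4 * a = 4 * (a - 1) + 4 := by omega
    rw [h1, h2, h3, h4]
    have f1 : π₂ (4 * (a - 1) + 1) = 4 * (a - 1) + 1 :=
      hπ₂fix _ (fun k _ => by omega)
    have f4 : π₂ (4 * (a - 1) + 4) = 4 * (a - 1) + 4 :=
      hπ₂fix _ (fun k _ => by omega)
    have s := hπ₂swap (a - 1) hk
    rw [f1, f4, s.1, s.2]
    constructor <;> simp [Nat.dist] <;> omega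
  · intro a ha har
    have hk : a < r / 2 := by omega
    have h1 : 4 * a - 1 = 4 * (a - 1) + 3 := by omega
    rw [h1]
    have f1 : π₃ (4 * (a - 1) + 3) = 4 * (a - 1) + 3 :=
      hπ₃fix _ (fun k hk1 _ => by omega)
    have f2 : π₃ (4 * a + 2) = 4 * a + 2 :=
      hπ₃fix _ (fun k hk1 _ => by omega)
    have s := hπ₃swap a ha hk
    rw [f1, f2, s.1, s.2]
    constructor <;> simp [Nat.dist] <;> omega
end
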